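/- Let 𝒜 be an abelian group and g, h : 𝒜 → 𝒜 be endomorphisms. Then there exists a function κ : 𝒜 × 𝒜 → 𝒜 such that κ(a_1 − a_3, a_1 − g(a_2)) = a_3 − h(a_2) for all a_1, a_2, a_3 ∈ 𝒜 if and only if h = g. -/

import Mathlib

/-- algebraic core of Proposition `swap_i`: for an abelian group `𝒜`
and endomorphisms `g, h : 𝒜 → 𝒜`, there exists `κ : 𝒜 × 𝒜 → 𝒜` with
`κ(a₁ − a₃, a₁ − g(a₂)) = a₃ − h(a₂)` for all `a₁, a₂, a₃` if and only if `h = g`. -/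
theorem conv_core {𝒜 : Type} [AddCommGroup 𝒜] (g h : 𝒜 → 𝒜)
    (hg : ∀ a b : 𝒜, g (a + b) = g a + g b)
    (hh : ∀ a b : 𝒜, h (a + b) = h a + h b) :
    (∃ κ : 𝒜 × 𝒜 → 𝒜, ∀ a₁ a₂ a₃ : 𝒜, κ (a₁ - a₃, a₁ - g a₂) = a₃ - h a₂) ↔ h = g := by
  constructor
  · rintro ⟨κ, hκ⟩
    have hg0 : g 0 = 0 := by have := hg 0 0; simpa using this
    have hh0 : h 0 = 0 := by have := hh 0 0; simpa using this
    funext a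
    have h1 := hκ (g a) a 0
    have h2 := hκ 0 0 (-(g a))
    simp [hg0, hh0] at h1 h2
    rw [h2] at h1
    exact (neg_inj.mp h1.symm)
  · rintro rfl
    exact ⟨fun p => p.2 - p.1, fun a₁ a₂ a₃ => by dsimp only; abel⟩
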